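/- Given integers $0 < s < n$ with $s$ even, there exist $N \ge \left(\frac{n}{2s}\right)^{s/4}$ subsets $S_1, \dots, S_N$ of $\{1, \dots, n\}$ such that $|S_j| = s/2$ for all $j$ and $|S_j \cap S_k| < \frac{s}{4}$ whenever $j \ne k$. -/

import Mathlib

open Finset


lemma aux_choose_ratio (k n : ℕ) (h : k ≤ n) :
    ∀ t : ℕ, (((n : ℝ) + t) / ((k : ℝ) + t)) ^ t * (n.choose k) ≤ ((n + t).choose (k + t)) := by
  intro t
  induction t with
  | zero => simp
  | succ t ih =>
    rcases Nat.eq_zero_or_pos (k + t) with h0 | hpos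
    · obtain ⟨hk0, ht0⟩ : k = 0 ∧ t = 0 := by omega
      subst hk0; subst ht0
      simp [Nat.choose_one_right]
    · have hkt : (0 : ℝ) < (k : ℝ) + t := by
        have : (0:ℝ) < ((k + t : ℕ) : ℝ) := by exact_mod_cast hpos
        push_cast at this; linarith
      have hkt1 : (0 : ℝ) < (k : ℝ) + t + 1 := by positivity
      have hid : (((n + t + 1).choose (k + t + 1) : ℝ)) * ((k : ℝ) + t + 1)
          = ((n : ℝ) + t + 1) * (((n + t).choose (k + t) : ℝ)) := by
        have := Nat.add_one_mul_choose_eq (n + t) (k + t)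
        have h2 : ((Nat.succ (n+t) * Nat.choose (n+t) (k+t) : ℕ) : ℝ)
            = ((Nat.choose (n+t+1) (k+t+1) * Nat.succ (k+t) : ℕ) : ℝ) := by
          exact_mod_cast congrArg (Nat.cast (R := ℝ)) this
        push_cast at h2
        linarith
      have hratio : ((n : ℝ) + t + 1) / ((k : ℝ) + t + 1) ≤ ((n : ℝ) + t) / ((k : ℝ) + t) := by
        rw [div_le_div_iff₀ hkt1 hkt]
        have : (k : ℝ) ≤ n := by exact_mod_cast h
        nlinarith
      have hr1 : (0 : ℝ) ≤ ((n : ℝ) + t + 1) / ((k : ℝ) + t + 1) := by positivity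
      have heq : (((n + t + 1).choose (k + t + 1) : ℝ))
          = (((n : ℝ) + t + 1) / ((k : ℝ) + t + 1)) * (((n + t).choose (k + t) : ℝ)) := by
        field_simp
        linarith [hid]
      push_cast
      calc (((n : ℝ) + (t + 1)) / ((k : ℝ) + (t + 1))) ^ (t + 1) * (n.choose k)
          = (((n : ℝ) + t + 1) / ((k : ℝ) + t + 1)) *
            ((((n : ℝ) + t + 1) / ((k : ℝ) + t + 1)) ^ t * (n.choose k)) := by ring
        _ ≤ (((n : ℝ) + t + 1) / ((k : ℝ) + t + 1)) *
            ((((n : ℝ) + t) / ((k : ℝ) + t)) ^ t * (n.choose k)) := by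
            apply mul_le_mul_of_nonneg_left _ hr1
            apply mul_le_mul_of_nonneg_right _ (by positivity)
            exact pow_le_pow_left₀ hr1 hratio t
        _ ≤ (((n : ℝ) + t + 1) / ((k : ℝ) + t + 1)) * (((n + t).choose (k + t) : ℝ)) := by
            apply mul_le_mul_of_nonneg_left _ hr1
            exact_mod_cast ih
        _ = (((n + t + 1).choose (k + t + 1) : ℝ)) := heq.symm


lemma choose_lower (n k t : ℕ) (ht : t ≤ k) (hkn : k ≤ n) :
    ((n : ℝ) / k) ^ t * ((n - t).choose (k - t)) ≤ (n.choose k) := by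
  have h := aux_choose_ratio (k - t) (n - t) (by omega) t
  have e1 : ((n - t : ℕ) : ℝ) + t = (n : ℝ) := by
    rw [Nat.cast_sub (ht.trans hkn)]; ring
  have e2 : ((k - t : ℕ) : ℝ) + t = (k : ℝ) := by
    rw [Nat.cast_sub ht]; ring
  rw [e1, e2, Nat.sub_add_cancel (ht.trans hkn), Nat.sub_add_cancel ht] at h
  exact h

lemma bad_count (n k t : ℕ) (A : Finset (Fin n)) (hA : A.card = k) :
    ((Finset.univ.powersetCard k).filter (fun B => t ≤ (A ∩ B).card)).card
      ≤ k.choose t * (n - t).choose (k - t) := by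
  classical
  set target := (A.powersetCard t).sigma
      (fun T => ((Finset.univ \ T).powersetCard (k - t))) with htarget
  have hcard : target.card = k.choose t * (n - t).choose (k - t) := by
    rw [htarget, Finset.card_sigma]
    rw [Finset.sum_congr rfl (fun T hT => ?_), Finset.sum_const,
      Finset.card_powersetCard, hA, smul_eq_mul]
    rw [Finset.card_powersetCard, Finset.card_sdiff_of_subset (Finset.subset_univ T)]
    rw [Finset.mem_powersetCard] at hT
    rw [hT.2, Finset.card_univ, Fintype.card_fin]
  rw [← hcard]
  set f : Finset (Fin n) → (Σ _ : Finset (Fin n), Finset (Fin n)) :=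
    fun B => if h : t ≤ (A ∩ B).card then
        ⟨(Finset.exists_subset_card_eq h).choose,
          B \ (Finset.exists_subset_card_eq h).choose⟩
      else ⟨∅, ∅⟩ with hf
  apply Finset.card_le_card_of_injOn f
  · intro B hB
    rw [Finset.mem_coe, Finset.mem_filter, Finset.mem_powersetCard] at hB
    obtain ⟨⟨-, hBk⟩, hB2⟩ := hB
    simp only [hf, dif_pos hB2]
    obtain ⟨hsub, hcardT⟩ := (Finset.exists_subset_card_eq hB2).choose_spec
    set T := (Finset.exists_subset_card_eq hB2).choose
    have hTB : T ⊆ B := hsub.trans (Finset.inter_subset_right)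
    rw [htarget, Finset.mem_coe, Finset.mem_sigma]
    constructor
    · rw [Finset.mem_powersetCard]
      exact ⟨hsub.trans Finset.inter_subset_left, hcardT⟩
    · rw [Finset.mem_powersetCard]
      constructor
      · intro x hx
        rw [Finset.mem_sdiff] at hx ⊢
        exact ⟨Finset.mem_univ _, hx.2⟩
      · rw [Finset.card_sdiff_of_subset hTB, hBk, hcardT]
  · intro B1 h1 B2 h2 heq
    simp only [Finset.coe_filter, Set.mem_setOf_eq, Finset.mem_powersetCard] at h1 h2
    simp only [hf, dif_pos h1.2, dif_pos h2.2] at heq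
    rw [Sigma.ext_iff] at heq
    obtain ⟨hfst, hsnd⟩ := heq
    rw [heq_eq_eq] at hsnd
    dsimp only at hfst hsnd
    obtain ⟨hsub1, -⟩ := (Finset.exists_subset_card_eq h1.2).choose_spec
    obtain ⟨hsub2, -⟩ := (Finset.exists_subset_card_eq h2.2).choose_spec
    have hT1 : (Finset.exists_subset_card_eq h1.2).choose ⊆ B1 :=
      hsub1.trans Finset.inter_subset_right
    have hT2 : (Finset.exists_subset_card_eq h2.2).choose ⊆ B2 :=
      hsub2.trans Finset.inter_subset_right
    rw [← Finset.sdiff_union_of_subset hT1, ← Finset.sdiff_union_of_subset hT2,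
      hsnd, hfst]

/-- Given even `0 < s < n`, there exist `N ≥ (n/2s)^{s/4}` subsets `S_1, …, S_N` of
`{1, …, n}`, each of cardinality `s/2`, with pairwise intersections of cardinality `< s/4`. -/

theorem exists_many_almost_disjoint_subsets
    (s n : ℕ) (hs : 0 < s) (hsn : s < n) (hse : Even s) :
    ∃ N : ℕ, ((n : ℝ) / (2 * s)) ^ ((s : ℝ) / 4) ≤ (N : ℝ) ∧
      ∃ S : Fin N → Finset (Fin n),
        (∀ j, (S j).card = s / 2) ∧
          ∀ j k, j ≠ k → ((S j ∩ S k).card : ℝ) < (s : ℝ) / 4 := by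
  classical
  obtain ⟨r, hr⟩ := hse
  set k := s / 2 with hkdef
  set t := (s + 3) / 4 with htdef
  have hsk : s = 2 * k := by omega
  have ht1 : 1 ≤ t := by omega
  have htk : t ≤ k := by omega
  have hkn : k ≤ n := by omega
  have hkpos : 0 < k := by omega
  have hts : 4 * t ≤ s + 3 := by omega
  have hst : s ≤ 4 * t := by omega
  -- maximal family
  set P : Finset (Finset (Fin n)) → Prop := fun F =>
    (∀ A ∈ F, A.card = k) ∧ ∀ A ∈ F, ∀ B ∈ F, A ≠ B → (A ∩ B).card < t with hP
  obtain ⟨F, hFmem, hFmax⟩ : ∃ F ∈ (Finset.univ : Finset (Finset (Finset (Fin n)))).filter P,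
      ∀ x ∈ (Finset.univ : Finset (Finset (Finset (Fin n)))).filter P, ¬ F < x := by
    obtain ⟨F, hF⟩ := Finset.exists_maximal
      (s := (Finset.univ : Finset (Finset (Finset (Fin n)))).filter P)
      ⟨∅, Finset.mem_filter.2 ⟨Finset.mem_univ _, by simp [hP]⟩⟩
    exact ⟨F, hF.1, fun x hx hlt => hlt.2 (hF.2 hx hlt.1)⟩
  rw [Finset.mem_filter] at hFmem
  obtain ⟨-, hF1, hF2⟩ := hFmem
  -- coverage by maximality
  have hcover : ∀ B : Finset (Fin n), B.card = k → ∃ A ∈ F, t ≤ (A ∩ B).card := by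
    intro B hB
    by_contra hcon
    push_neg at hcon
    have hBF : B ∉ F := by
      intro h
      have := hcon B h
      rw [Finset.inter_self, hB] at this
      omega
    refine hFmax (insert B F) (Finset.mem_filter.2 ⟨Finset.mem_univ _, ?_, ?_⟩)
      (Finset.ssubset_insert hBF)
    · intro A hA
      rcases Finset.mem_insert.1 hA with rfl | hA
      · exact hB
      · exact hF1 A hA
    · intro A hA C hC hne
      rcases Finset.mem_insert.1 hA with rfl | hAF
      · rcases Finset.mem_insert.1 hC with rfl | hCF
        · exact absurd rfl hne
        · rw [Finset.inter_comm]; exact hcon C hCF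
      · rcases Finset.mem_insert.1 hC with rfl | hCF
        · exact hcon A hAF
        · exact hF2 A hAF C hCF hne
  -- counting
  have hcount : n.choose k ≤ F.card * (k.choose t * (n - t).choose (k - t)) := by
    have hsubset : (Finset.univ.powersetCard k : Finset (Finset (Fin n))) ⊆
        F.biUnion (fun A => (Finset.univ.powersetCard k).filter
          (fun B => t ≤ (A ∩ B).card)) := by
      intro B hB
      have hBk : B.card = k := (Finset.mem_powersetCard.1 hB).2
      obtain ⟨A, hA, hAB⟩ := hcover B hBk
      exact Finset.mem_biUnion.2 ⟨A, hA, Finset.mem_filter.2 ⟨hB, hAB⟩⟩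
    calc n.choose k
        = (Finset.univ.powersetCard k : Finset (Finset (Fin n))).card := by
          rw [Finset.card_powersetCard, Finset.card_univ, Fintype.card_fin]
      _ ≤ (F.biUnion (fun A => (Finset.univ.powersetCard k).filter
            (fun B => t ≤ (A ∩ B).card))).card := Finset.card_le_card hsubset
      _ ≤ ∑ A ∈ F, ((Finset.univ.powersetCard k).filter
            (fun B => t ≤ (A ∩ B).card)).card := Finset.card_biUnion_le
      _ ≤ ∑ A ∈ F, k.choose t * (n - t).choose (k - t) :=
          Finset.sum_le_sum (fun A hA => bad_count n k t A (hF1 A hA))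
      _ = F.card * (k.choose t * (n - t).choose (k - t)) := by
          rw [Finset.sum_const, smul_eq_mul]
  refine ⟨F.card, ?_, ?_⟩
  · -- arithmetic
    have h2k : k.choose t ≤ 2 ^ k := by
      rw [← Nat.sum_range_choose k]
      exact Finset.single_le_sum (f := fun i => k.choose i)
        (fun i _ => Nat.zero_le _) (Finset.mem_range.2 (by omega))
    have hCpos : (0 : ℝ) < ((n - t).choose (k - t) : ℝ) := by
      exact_mod_cast Nat.choose_pos (by omega)
    have hchain : ((n : ℝ) / k) ^ t * ((n - t).choose (k - t)) ≤
        (F.card * 2 ^ k) * ((n - t).choose (k - t)) := by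
      calc ((n : ℝ) / k) ^ t * ((n - t).choose (k - t))
          ≤ (n.choose k : ℝ) := choose_lower n k t htk hkn
        _ ≤ (F.card : ℝ) * ((k.choose t : ℝ) * ((n - t).choose (k - t) : ℝ)) := by
            exact_mod_cast Nat.cast_le.2 hcount
        _ ≤ (F.card * 2 ^ k) * ((n - t).choose (k - t)) := by
            rw [mul_assoc]
            apply mul_le_mul_of_nonneg_left _ (Nat.cast_nonneg _)
            apply mul_le_mul_of_nonneg_right _ (le_of_lt hCpos)
            exact_mod_cast h2k
    have hmain : ((n : ℝ) / k) ^ t ≤ F.card * 2 ^ k :=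
      le_of_mul_le_mul_right hchain hCpos
    -- rpow manipulations
    set x : ℝ := (n : ℝ) / k with hx
    have hx1 : (1 : ℝ) ≤ x := by
      rw [hx, le_div_iff₀ (by exact_mod_cast hkpos)]
      simp only [one_mul]
      exact_mod_cast hkn
    have hdiv : (n : ℝ) / (2 * s) = x / 4 := by
      rw [hx, hsk]; push_cast
      rw [div_div]
      congr 1
      ring
    rw [hdiv]
    have hx0 : (0 : ℝ) ≤ x := le_trans zero_le_one hx1
    rw [Real.div_rpow hx0 (by norm_num)]
    have h4 : (4 : ℝ) ^ ((s : ℝ) / 4) = 2 ^ (k : ℕ) := by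
      have : (4 : ℝ) = (2 : ℝ) ^ (2 : ℝ) := by
        rw [show ((2:ℝ):ℝ) = ((2:ℕ):ℝ) by norm_num, Real.rpow_natCast]; norm_num
      rw [this, ← Real.rpow_natCast 2 k, ← Real.rpow_mul (by norm_num)]
      congr 1
      rw [hsk]; push_cast; ring
    rw [h4]
    rw [div_le_iff₀ (by positivity)]
    calc x ^ ((s : ℝ) / 4) ≤ x ^ ((t : ℕ) : ℝ) := by
          apply Real.rpow_le_rpow_of_exponent_le hx1
          have : (s : ℝ) ≤ 4 * t := by exact_mod_cast hst
          linarith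
      _ = x ^ (t : ℕ) := Real.rpow_natCast x t
      _ ≤ F.card * 2 ^ k := hmain
  · -- the family
    refine ⟨fun j => ((F.equivFin.symm j : {x // x ∈ F}) : Finset (Fin n)), ?_, ?_⟩
    · intro j
      exact hF1 _ (F.equivFin.symm j).2
    · intro j l hjl
      have hne : ((F.equivFin.symm j : {x // x ∈ F}) : Finset (Fin n)) ≠
          ((F.equivFin.symm l : {x // x ∈ F}) : Finset (Fin n)) := by
        intro h
        exact hjl (F.equivFin.symm.injective (Subtype.ext h))
      have := hF2 _ (F.equivFin.symm j).2 _ (F.equivFin.symm l).2 hne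
      have h4 : 4 * ((((F.equivFin.symm j : {x // x ∈ F}) : Finset (Fin n)) ∩
          ((F.equivFin.symm l : {x // x ∈ F}) : Finset (Fin n))).card) < s := by omega
      have := (Nat.cast_lt (α := ℝ)).2 h4
      push_cast at this
      linarith
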